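/- Let (Ω, F, P) be a probability space, V : Ω → ℝ^k a measurable random vector, f : ℝ^k → ℝ a measurable function, and W : Ω → ℝ a random variable independent of V, Gaussian with mean m and variance s² > 0. Then, P-almost surely, |E[σ(f(V) + W) | σ(V)] − σ((f(V) + m)/√(1 + (π/8)s²))| ≤ 2·‖δ‖_∞. -/

import Mathlib

open MeasureTheory ProbabilityTheory Real
open scoped NNReal

/-- The standard normal CDF `Φ(t) = (2π)^{-1/2} ∫_{-∞}^t e^{-s²/2} ds`. -/
noncomputable def stdNormalCDF (t : ℝ) : ℝ :=
  ∫ s in Set.Iic t, Real.exp (-s ^ 2 / 2) / Real.sqrt (2 * Real.pi)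

/-- The logistic (sigmoid) function `σ(t) = 1/(1 + e^{-t})`. -/
noncomputable def logisticFn (t : ℝ) : ℝ := 1 / (1 + Real.exp (-t))

/-- `δ(t) = Φ(t) − σ(√(8/π)·t)`. -/
noncomputable def deltaFn (t : ℝ) : ℝ :=
  stdNormalCDF t - logisticFn (Real.sqrt (8 / Real.pi) * t)

open scoped ENNReal

section Auxiliary

lemma gaussianPDFReal_zero_one (x : ℝ) :
    gaussianPDFReal 0 1 x = Real.exp (-x ^ 2 / 2) / Real.sqrt (2 * Real.pi) := by
  rw [gaussianPDFReal]
  rw [show ((1:ℝ≥0):ℝ) = 1 from rfl]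
  rw [inv_mul_eq_div]
  ring_nf

lemma stdNormalCDF_eq (t : ℝ) :
    stdNormalCDF t = ∫ x in Set.Iic t, gaussianPDFReal 0 1 x := by
  simp [stdNormalCDF, gaussianPDFReal_zero_one]

lemma stdNormalCDF_nonneg (t : ℝ) : 0 ≤ stdNormalCDF t := by
  rw [stdNormalCDF_eq]
  exact setIntegral_nonneg measurableSet_Iic fun x _ => gaussianPDFReal_nonneg 0 1 x

lemma stdNormalCDF_le_one (t : ℝ) : stdNormalCDF t ≤ 1 := by
  rw [stdNormalCDF_eq, ← integral_gaussianPDFReal_eq_one 0 (one_ne_zero)]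
  exact setIntegral_le_integral (integrable_gaussianPDFReal 0 1)
    (Filter.Eventually.of_forall fun x => gaussianPDFReal_nonneg 0 1 x)

lemma monotone_stdNormalCDF : Monotone stdNormalCDF := fun a b hab => by
  rw [stdNormalCDF_eq, stdNormalCDF_eq]
  exact setIntegral_mono_set (integrable_gaussianPDFReal 0 1).restrict
    (Filter.Eventually.of_forall fun x => gaussianPDFReal_nonneg 0 1 x)
    (HasSubset.Subset.eventuallyLE (Set.Iic_subset_Iic.mpr hab))

lemma measurable_stdNormalCDF : Measurable stdNormalCDF :=
  monotone_stdNormalCDF.measurable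

lemma logisticFn_nonneg (t : ℝ) : 0 ≤ logisticFn t := by
  unfold logisticFn; positivity

lemma logisticFn_le_one (t : ℝ) : logisticFn t ≤ 1 := by
  unfold logisticFn
  rw [div_le_one (by positivity)]
  nlinarith [Real.exp_pos (-t)]

lemma continuous_logisticFn : Continuous logisticFn := by
  unfold logisticFn
  exact continuous_const.div (by continuity) (fun t => by nlinarith [Real.exp_pos (-t)])

lemma abs_deltaFn_le_one (t : ℝ) : |deltaFn t| ≤ 1 := by
  rw [deltaFn, abs_sub_le_iff]
  constructor <;>
    nlinarith [stdNormalCDF_nonneg t, stdNormalCDF_le_one t,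
      logisticFn_nonneg (Real.sqrt (8 / Real.pi) * t),
      logisticFn_le_one (Real.sqrt (8 / Real.pi) * t)]

lemma bddAbove_deltaFn : BddAbove (Set.range fun t : ℝ => |deltaFn t|) :=
  ⟨1, by rintro x ⟨t, rfl⟩; exact abs_deltaFn_le_one t⟩

lemma abs_deltaFn_le_sup (t : ℝ) : |deltaFn t| ≤ ⨆ u : ℝ, |deltaFn u| :=
  le_ciSup bddAbove_deltaFn t

lemma measurable_deltaFn : Measurable deltaFn :=
  measurable_stdNormalCDF.sub
    (continuous_logisticFn.measurable.comp (measurable_const_mul _))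

/-- Integral against a nondegenerate Gaussian as a pdf-weighted Lebesgue integral. -/
lemma integral_gaussianReal_eq {v : ℝ≥0} (hv : v ≠ 0) (μ : ℝ) (g : ℝ → ℝ) :
    ∫ x, g x ∂gaussianReal μ v = ∫ x, gaussianPDFReal μ v x * g x := by
  rw [gaussianReal_of_var_ne_zero _ hv]
  have : (gaussianPDF μ v) = fun x => ((Real.toNNReal (gaussianPDFReal μ v x) : ℝ≥0) : ℝ≥0∞) := by
    rfl
  rw [this, integral_withDensity_eq_integral_smul
    ((measurable_gaussianPDFReal μ v).real_toNNReal) g]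
  congr 1 with x
  rw [NNReal.smul_def, Real.coe_toNNReal _ (gaussianPDFReal_nonneg μ v x), smul_eq_mul]

lemma gaussianReal_eq_map (μ0 : ℝ) (S : ℝ≥0) (hS : S ≠ 0) :
    gaussianReal μ0 S = (gaussianReal 0 1).map (fun x => Real.sqrt S * x + μ0) := by
  have hS0 : (0:ℝ) < (S:ℝ) := by positivity
  have h1 : (gaussianReal 0 1).map (fun x => Real.sqrt S * x) = gaussianReal 0 S := by
    have := gaussianReal_map_const_mul (μ := 0) (v := 1) (Real.sqrt S)
    simp only [mul_zero, mul_one] at this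
    convert this using 2
    ext
    simp [Real.sq_sqrt S.coe_nonneg]
  have h2 : (gaussianReal 0 S).map (· + μ0) = gaussianReal μ0 S := by
    simpa using gaussianReal_map_add_const (μ := 0) (v := S) μ0
  rw [← h2, ← h1, Measure.map_map (measurable_id'.add_const μ0)
    (measurable_id'.const_mul _)]
  rfl

/-- The CDF of a nondegenerate Gaussian, in terms of the standard normal CDF. -/
lemma setIntegral_gaussianPDFReal_Iic (μ0 : ℝ) (S : ℝ≥0) (hS : S ≠ 0) (α : ℝ) :
    ∫ x in Set.Iic α, gaussianPDFReal μ0 S x = stdNormalCDF ((α - μ0) / Real.sqrt S) := by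
  have hS0 : (0:ℝ) < (S:ℝ) := by positivity
  have hsq : (0:ℝ) < Real.sqrt S := Real.sqrt_pos.mpr hS0
  have key : gaussianReal μ0 S (Set.Iic α)
      = gaussianReal 0 1 (Set.Iic ((α - μ0) / Real.sqrt S)) := by
    rw [gaussianReal_eq_map μ0 S hS, Measure.map_apply
      (by exact (measurable_id'.const_mul _).add_const μ0) measurableSet_Iic]
    congr 1
    ext x
    simp only [Set.mem_preimage, Set.mem_Iic]
    rw [le_div_iff₀ hsq]
    constructor <;> intro h <;> nlinarith
  rw [gaussianReal_apply_eq_integral _ hS, gaussianReal_apply_eq_integral _ one_ne_zero,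
    ← stdNormalCDF_eq] at key
  rwa [ENNReal.ofReal_eq_ofReal_iff
    (setIntegral_nonneg measurableSet_Iic fun x _ => gaussianPDFReal_nonneg _ _ x)
    (stdNormalCDF_nonneg _)] at key

/-- Factorization of the product of two Gaussian densities. -/
lemma pdf_factor (m : ℝ) (s2 : ℝ≥0) (hs2 : s2 ≠ 0) (c x w : ℝ) (S T : ℝ≥0)
    (hS : (S : ℝ) = 1 + c ^ 2 * (s2 : ℝ)) (hT : (T : ℝ) = (s2 : ℝ) / (1 + c ^ 2 * (s2 : ℝ))) :
    gaussianPDFReal m s2 w * gaussianPDFReal 0 1 (x + c * w)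
      = gaussianPDFReal (-(c * m)) S x *
        gaussianPDFReal ((m - c * (s2 : ℝ) * x) / (1 + c ^ 2 * (s2 : ℝ))) T w := by
  have hs : (0:ℝ) < (s2:ℝ) := by positivity
  have hSp : (0:ℝ) < 1 + c ^ 2 * (s2:ℝ) := by positivity
  unfold gaussianPDFReal
  rw [hS, hT]
  rw [mul_mul_mul_comm, ← Real.exp_add, mul_mul_mul_comm, ← Real.exp_add]
  have hconst : (√(2 * π * (s2:ℝ)))⁻¹ * (√(2 * π * ((1:ℝ≥0):ℝ)))⁻¹
      = (√(2 * π * (1 + c ^ 2 * (s2:ℝ))))⁻¹ *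
        (√(2 * π * ((s2:ℝ) / (1 + c ^ 2 * (s2:ℝ)))))⁻¹ := by
    rw [← mul_inv, ← mul_inv, ← Real.sqrt_mul (by positivity), ← Real.sqrt_mul (by positivity)]
    congr 1
    push_cast
    field_simp
  rw [hconst]
  congr 1
  rw [NNReal.coe_one]
  congr 1
  field_simp
  ring

/-- Gaussian smoothing of the standard normal CDF. -/
lemma key_pdf (m : ℝ) (s2 : ℝ≥0) (hs2 : s2 ≠ 0) (c α : ℝ) :
    ∫ w, gaussianPDFReal m s2 w * stdNormalCDF (α + c * w)
      = stdNormalCDF ((α + c * m) / Real.sqrt (1 + c ^ 2 * (s2 : ℝ))) := by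
  have hs : (0:ℝ) < (s2:ℝ) := by
    have := hs2; positivity
  have hSp : (0:ℝ) < 1 + c ^ 2 * (s2:ℝ) := by positivity
  set S : ℝ≥0 := ⟨1 + c ^ 2 * (s2:ℝ), hSp.le⟩ with hSdef
  set T : ℝ≥0 := ⟨(s2:ℝ) / (1 + c ^ 2 * (s2:ℝ)), by positivity⟩ with hTdef
  have hScoe : (S : ℝ) = 1 + c ^ 2 * (s2:ℝ) := rfl
  have hTcoe : (T : ℝ) = (s2:ℝ) / (1 + c ^ 2 * (s2:ℝ)) := rfl
  have hSne : S ≠ 0 := by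
    intro h
    have : (S:ℝ) = 0 := by rw [h]; simp
    rw [hScoe] at this; linarith
  have hTne : T ≠ 0 := by
    intro h
    have : (T:ℝ) = 0 := by rw [h]; simp
    rw [hTcoe] at this
    have : (0:ℝ) < (s2:ℝ) / (1 + c ^ 2 * (s2:ℝ)) := by positivity
    linarith
  -- pointwise CDF as set integral
  have hpoint : ∀ w : ℝ, stdNormalCDF (α + c * w)
      = ∫ x in Set.Iic α, gaussianPDFReal (0 - c * w) 1 x := by
    intro w
    rw [setIntegral_gaussianPDFReal_Iic _ 1 one_ne_zero]
    norm_num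
  -- the two-variable function
  set f : ℝ → ℝ → ℝ := fun w x => gaussianPDFReal m s2 w * gaussianPDFReal (0 - c * w) 1 x
    with hfdef
  have hfcont : Continuous (Function.uncurry f) := by
    have h1 : Continuous (gaussianPDFReal m s2) := by unfold gaussianPDFReal; fun_prop
    have h2 : Continuous (fun p : ℝ × ℝ => gaussianPDFReal (0 - c * p.1) 1 p.2) := by
      unfold gaussianPDFReal; fun_prop
    exact (h1.comp continuous_fst).mul h2
  have hf_nonneg : ∀ w x, 0 ≤ f w x :=
    fun w x => mul_nonneg (gaussianPDFReal_nonneg _ _ _) (gaussianPDFReal_nonneg _ _ _)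
  have hnormint : ∀ w : ℝ, ∫ x in Set.Iic α, ‖f w x‖
      = gaussianPDFReal m s2 w * stdNormalCDF (α + c * w) := by
    intro w
    simp_rw [Real.norm_eq_abs, abs_of_nonneg (hf_nonneg w _)]
    rw [hfdef]
    simp only
    rw [integral_const_mul, setIntegral_gaussianPDFReal_Iic _ 1 one_ne_zero]
    norm_num
  have hint : Integrable (Function.uncurry f) (volume.prod (volume.restrict (Set.Iic α))) := by
    rw [integrable_prod_iff hfcont.aestronglyMeasurable]
    constructor
    · refine Filter.Eventually.of_forall fun w => ?_
      simp only [Function.uncurry_apply_pair]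
      exact ((integrable_gaussianPDFReal (0 - c * w) 1).restrict).const_mul _
    · simp only [Function.uncurry_apply_pair]
      have heq : (fun w => ∫ x in Set.Iic α, ‖f w x‖)
          = fun w => gaussianPDFReal m s2 w * stdNormalCDF (α + c * w) := funext hnormint
      rw [heq]
      refine (integrable_gaussianPDFReal m s2).mono' ?_ ?_
      · exact ((measurable_gaussianPDFReal m s2).mul
          (measurable_stdNormalCDF.comp (by fun_prop))).aestronglyMeasurable
      · refine Filter.Eventually.of_forall fun w => ?_
        rw [Real.norm_eq_abs, abs_of_nonneg (mul_nonneg (gaussianPDFReal_nonneg _ _ _)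
          (stdNormalCDF_nonneg _))]
        calc gaussianPDFReal m s2 w * stdNormalCDF (α + c * w)
            ≤ gaussianPDFReal m s2 w * 1 :=
              mul_le_mul_of_nonneg_left (stdNormalCDF_le_one _) (gaussianPDFReal_nonneg _ _ _)
          _ = gaussianPDFReal m s2 w := mul_one _
  calc ∫ w, gaussianPDFReal m s2 w * stdNormalCDF (α + c * w)
      = ∫ w, ∫ x in Set.Iic α, f w x := by
        congr 1 with w
        rw [hpoint w, hfdef]
        simp only
        rw [integral_const_mul]
    _ = ∫ x in Set.Iic α, ∫ w, f w x := integral_integral_swap hint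
    _ = ∫ x in Set.Iic α, gaussianPDFReal (-(c * m)) S x := by
        refine setIntegral_congr_fun measurableSet_Iic fun x _ => ?_
        have hfac : ∀ w : ℝ, f w x = gaussianPDFReal (-(c * m)) S x *
            gaussianPDFReal ((m - c * (s2 : ℝ) * x) / (1 + c ^ 2 * (s2 : ℝ))) T w := by
          intro w
          rw [hfdef]
          simp only
          have : gaussianPDFReal (0 - c * w) 1 x = gaussianPDFReal 0 1 (x + c * w) := by
            rw [gaussianPDFReal_add]
          rw [this]
          exact pdf_factor m s2 hs2 c x w S T hScoe hTcoe
        simp_rw [hfac]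
        rw [integral_const_mul, integral_gaussianPDFReal_eq_one _ hTne, mul_one]
    _ = stdNormalCDF ((α + c * m) / Real.sqrt (1 + c ^ 2 * (s2 : ℝ))) := by
        rw [setIntegral_gaussianPDFReal_Iic _ S hSne]
        norm_num [hScoe]

/-- The central analytic estimate. -/
lemma analytic_bound (m a : ℝ) (s2 : ℝ≥0) (hs2 : s2 ≠ 0) :
    |(∫ w, logisticFn (a + w) ∂gaussianReal m s2)
        - logisticFn ((a + m) / Real.sqrt (1 + Real.pi / 8 * (s2 : ℝ)))|
      ≤ 2 * ⨆ t : ℝ, |deltaFn t| := by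
  have hπ : (0:ℝ) < Real.pi := Real.pi_pos
  set c : ℝ := Real.sqrt (Real.pi / 8) with hcdef
  have hc2 : c ^ 2 = Real.pi / 8 := Real.sq_sqrt (by positivity)
  have hck : Real.sqrt (8 / Real.pi) * c = 1 := by
    rw [hcdef, ← Real.sqrt_mul (by positivity)]
    rw [show 8 / Real.pi * (Real.pi / 8) = 1 by field_simp]
    exact Real.sqrt_one
  have hlog : ∀ u : ℝ, logisticFn u = stdNormalCDF (c * u) - deltaFn (c * u) := by
    intro u
    rw [deltaFn, ← mul_assoc, hck, one_mul]
    ring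
  have hmΦ : Measurable fun w : ℝ => stdNormalCDF (c * (a + w)) :=
    measurable_stdNormalCDF.comp (by fun_prop)
  have hiΦ : Integrable (fun w => stdNormalCDF (c * (a + w))) (gaussianReal m s2) := by
    refine (integrable_const (1:ℝ)).mono' hmΦ.aestronglyMeasurable ?_
    refine Filter.Eventually.of_forall fun w => ?_
    rw [Real.norm_eq_abs, abs_of_nonneg (stdNormalCDF_nonneg _)]
    exact stdNormalCDF_le_one _
  have hmδ : Measurable fun w : ℝ => deltaFn (c * (a + w)) :=
    measurable_deltaFn.comp (by fun_prop)
  have hiδ : Integrable (fun w => deltaFn (c * (a + w))) (gaussianReal m s2) := by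
    refine (integrable_const (1:ℝ)).mono' hmδ.aestronglyMeasurable ?_
    exact Filter.Eventually.of_forall fun w => by
      rw [Real.norm_eq_abs]; exact abs_deltaFn_le_one _
  have hsplit : (∫ w, logisticFn (a + w) ∂gaussianReal m s2)
      = (∫ w, stdNormalCDF (c * (a + w)) ∂gaussianReal m s2)
        - ∫ w, deltaFn (c * (a + w)) ∂gaussianReal m s2 := by
    rw [← integral_sub hiΦ hiδ]
    congr 1 with w
    exact hlog (a + w)
  have hΦint : (∫ w, stdNormalCDF (c * (a + w)) ∂gaussianReal m s2)
      = stdNormalCDF ((c * a + c * m) / Real.sqrt (1 + c ^ 2 * (s2 : ℝ))) := by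
    rw [integral_gaussianReal_eq hs2]
    rw [← key_pdf m s2 hs2 c (c * a)]
    congr 1 with w
    ring_nf
  have htarget : logisticFn ((a + m) / Real.sqrt (1 + Real.pi / 8 * (s2 : ℝ)))
      = stdNormalCDF ((c * a + c * m) / Real.sqrt (1 + c ^ 2 * (s2 : ℝ)))
        - deltaFn (c * ((a + m) / Real.sqrt (1 + Real.pi / 8 * (s2 : ℝ)))) := by
    rw [hlog ((a + m) / Real.sqrt (1 + Real.pi / 8 * (s2 : ℝ)))]
    rw [hc2]
    ring_nf
  rw [hsplit, hΦint, htarget]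
  have habs : ∀ x y : ℝ, |x - y| ≤ |x| + |y| := fun x y => abs_sub x y
  have h1 : |deltaFn (c * ((a + m) / Real.sqrt (1 + Real.pi / 8 * (s2 : ℝ))))|
      ≤ ⨆ t : ℝ, |deltaFn t| := abs_deltaFn_le_sup _
  have h2 : |∫ w, deltaFn (c * (a + w)) ∂gaussianReal m s2| ≤ ⨆ t : ℝ, |deltaFn t| := by
    have := norm_integral_le_of_norm_le_const (μ := gaussianReal m s2)
      (C := ⨆ t : ℝ, |deltaFn t|) (f := fun w => deltaFn (c * (a + w)))
      (Filter.Eventually.of_forall fun w => by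
        rw [Real.norm_eq_abs]; exact abs_deltaFn_le_sup _)
    simpa using this
  calc |(stdNormalCDF ((c * a + c * m) / Real.sqrt (1 + c ^ 2 * (s2 : ℝ)))
          - ∫ w, deltaFn (c * (a + w)) ∂gaussianReal m s2)
        - (stdNormalCDF ((c * a + c * m) / Real.sqrt (1 + c ^ 2 * (s2 : ℝ)))
          - deltaFn (c * ((a + m) / Real.sqrt (1 + Real.pi / 8 * (s2 : ℝ)))))|
      = |deltaFn (c * ((a + m) / Real.sqrt (1 + Real.pi / 8 * (s2 : ℝ))))
          - ∫ w, deltaFn (c * (a + w)) ∂gaussianReal m s2| := by congr 1; ring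
    _ ≤ _ + _ := habs _ _
    _ ≤ (⨆ t : ℝ, |deltaFn t|) + ⨆ t : ℝ, |deltaFn t| := add_le_add h1 h2
    _ = 2 * ⨆ t : ℝ, |deltaFn t| := by ring

end Auxiliary

/-- Conditional-expectation form of Theorem 2: if `W ~ N(m, s²)` with `s² > 0` is
independent of the random vector `V`, then a.s.
`|E[σ(f(V) + W) | σ(V)] − σ((f(V) + m)/√(1 + (π/8)s²))| ≤ 2‖δ‖_∞`. -/
theorem logistic_condexp_bound {Ω : Type*} [MeasurableSpace Ω]
    (P : Measure Ω) [IsProbabilityMeasure P] (k : ℕ)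
    (V : Ω → (Fin k → ℝ)) (hV : Measurable V)
    (f : (Fin k → ℝ) → ℝ) (hf : Measurable f)
    (W : Ω → ℝ) (hW : Measurable W)
    (hindep : IndepFun V W P)
    (m : ℝ) (s2 : ℝ≥0) (hs2 : 0 < s2)
    (hWdist : P.map W = gaussianReal m s2) :
    ∀ᵐ ω ∂P,
      |(P[fun ω => logisticFn (f (V ω) + W ω) |
            MeasurableSpace.comap V inferInstance]) ω -
          logisticFn ((f (V ω) + m) / Real.sqrt (1 + (Real.pi / 8) * (s2 : ℝ)))| ≤
        2 * ⨆ t : ℝ, |deltaFn t| := by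
  have hprod : P.map (fun ω => (V ω, W ω)) = (P.map V).prod (gaussianReal m s2) := by
    rw [← hWdist]
    exact (indepFun_iff_map_prod_eq_prod_map_map hV.aemeasurable hW.aemeasurable).mp hindep
  have hcd : ∀ᵐ x ∂(P.map V), Kernel.const _ (gaussianReal m s2) x = condDistrib W V P x := by
    refine (condDistrib_ae_eq_of_measure_eq_compProd_of_measurable hV hW
      (κ := Kernel.const _ (gaussianReal m s2)) ?_).mono fun x hx => hx.symm
    rw [Measure.compProd_const, hprod]
  have hcd' : ∀ᵐ ω ∂P, condDistrib W V P (V ω) = gaussianReal m s2 := by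
    have := ae_of_ae_map hV.aemeasurable hcd
    filter_upwards [this] with ω hω
    rw [← hω, Kernel.const_apply]
  set g : (Fin k → ℝ) × ℝ → ℝ := fun p => logisticFn (f p.1 + p.2) with hgdef
  have hgm : Measurable g := continuous_logisticFn.measurable.comp
    ((hf.comp measurable_fst).add measurable_snd)
  have hgint : Integrable (fun ω => g (V ω, W ω)) P := by
    refine (integrable_const (1:ℝ)).mono'
      (hgm.comp ((hV.prodMk hW))).aestronglyMeasurable ?_
    refine Filter.Eventually.of_forall fun ω => ?_
    rw [Real.norm_eq_abs, abs_of_nonneg (logisticFn_nonneg _)]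
    exact logisticFn_le_one _
  have hce := condExp_prod_ae_eq_integral_condDistrib (μ := P) hV hW.aemeasurable
    hgm.stronglyMeasurable hgint
  filter_upwards [hce, hcd'] with ω hω hωcd
  rw [show (fun ω => logisticFn (f (V ω) + W ω)) = fun ω => g (V ω, W ω) from rfl]
  rw [hω, hωcd]
  exact analytic_bound m (f (V ω)) s2 hs2.ne'
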